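/- arXiv:2505.24218 — 3 statements merged into one kernel-verified Lean document; each statement's English description precedes it below -/
import Mathlib

section
/- For each point (x,p) in S = F⁻¹(1) ⊂ ℂ^{n+r} (where F(x,p) = Σ|xⱼ|² − Σdₖ|pₖ|²), the U(1)-orbits {e^{iθ}·(x,p) : θ ∈ ℝ} under the action e^{iθ}·(x,p) = (e^{iθ}x₁,…,e^{iθ}xₙ,e^{-id₁θ}p₁,…,e^{-id_rθ}p_r) are exactly the fibers of the restriction to S of the quotient map φ : (ℂⁿ∖{0}) × ℂ^r → X_CY by the ℂ*-charge action; consequently S/U(1) is in bijection with X_CY. -/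
open Complex

section Aux

open Finset

/-- If two charge-equivalent points both lie on `S = F⁻¹(1)`, the scaling factor has norm 1. -/
lemma aux_norm_one {n r : ℕ} (d : Fin r → ℕ) (hd : ∀ k, 0 < d k)
    (x : Fin n → ℂ) (p : Fin r → ℂ) (x' : Fin n → ℂ) (p' : Fin r → ℂ)
    (hS : (∑ j, ‖x j‖ ^ 2) - ∑ k, (d k : ℝ) * ‖p k‖ ^ 2 = 1)
    (hS' : (∑ j, ‖x' j‖ ^ 2) - ∑ k, (d k : ℝ) * ‖p' k‖ ^ 2 = 1)
    (lam : ℂ) (hlam : lam ≠ 0)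
    (hx : ∀ j, x' j = lam * x j) (hp : ∀ k, p' k = (lam ^ d k)⁻¹ * p k) :
    ‖lam‖ = 1 := by
  set t := ‖lam‖ with htdef
  have ht0 : 0 < t := norm_pos_iff.2 hlam
  have hA' : ∑ j, ‖x' j‖ ^ 2 = t ^ 2 * ∑ j, ‖x j‖ ^ 2 := by
    rw [Finset.mul_sum]
    exact Finset.sum_congr rfl fun j _ => by rw [hx j, norm_mul, mul_pow]
  have hp' : ∀ k, ‖p' k‖ ^ 2 = ‖p k‖ ^ 2 * ((t ^ d k)⁻¹) ^ 2 := by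
    intro k
    rw [hp k, norm_mul, norm_inv, norm_pow]
    ring
  have hB : (0:ℝ) ≤ ∑ k, (d k : ℝ) * ‖p k‖ ^ 2 :=
    Finset.sum_nonneg fun k _ => mul_nonneg (by positivity) (by positivity)
  have hA1 : (1:ℝ) ≤ ∑ j, ‖x j‖ ^ 2 := by linarith
  rcases lt_trichotomy t 1 with h1 | h1 | h1
  · exfalso
    have hBB : ∑ k, (d k : ℝ) * ‖p k‖ ^ 2 ≤ ∑ k, (d k : ℝ) * ‖p' k‖ ^ 2 := by
      apply Finset.sum_le_sum
      intro k _
      rw [hp' k]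
      have htd : t ^ d k ≤ 1 := pow_le_one₀ ht0.le h1.le
      have htd0 : 0 < t ^ d k := pow_pos ht0 _
      have h1i : (1:ℝ) ≤ (t ^ d k)⁻¹ := (one_le_inv₀ htd0).2 htd
      have h2i : (1:ℝ) ≤ ((t ^ d k)⁻¹) ^ 2 := one_le_pow₀ h1i
      have : ‖p k‖ ^ 2 ≤ ‖p k‖ ^ 2 * ((t ^ d k)⁻¹) ^ 2 :=
        le_mul_of_one_le_right (by positivity) h2i
      exact mul_le_mul_of_nonneg_left this (by positivity)
    have hlt : t ^ 2 * ∑ j, ‖x j‖ ^ 2 < ∑ j, ‖x j‖ ^ 2 := by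
      have ht2 : t ^ 2 < 1 := by nlinarith
      calc t ^ 2 * ∑ j, ‖x j‖ ^ 2 < 1 * ∑ j, ‖x j‖ ^ 2 :=
            mul_lt_mul_of_pos_right ht2 (by linarith)
        _ = ∑ j, ‖x j‖ ^ 2 := one_mul _
    rw [hA'] at hS'
    linarith
  · exact h1
  · exfalso
    have hBB : ∑ k, (d k : ℝ) * ‖p' k‖ ^ 2 ≤ ∑ k, (d k : ℝ) * ‖p k‖ ^ 2 := by
      apply Finset.sum_le_sum
      intro k _
      rw [hp' k]
      have htd : (1:ℝ) ≤ t ^ d k := one_le_pow₀ h1.le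
      have htd0 : 0 < t ^ d k := pow_pos ht0 _
      have h1i : (t ^ d k)⁻¹ ≤ 1 := inv_le_one_of_one_le₀ htd
      have h0 : (0:ℝ) ≤ (t ^ d k)⁻¹ := by positivity
      have h2i : ((t ^ d k)⁻¹) ^ 2 ≤ 1 := pow_le_one₀ h0 h1i
      have : ‖p k‖ ^ 2 * ((t ^ d k)⁻¹) ^ 2 ≤ ‖p k‖ ^ 2 :=
        mul_le_of_le_one_right (by positivity) h2i
      exact mul_le_mul_of_nonneg_left this (by positivity)
    have hlt : ∑ j, ‖x j‖ ^ 2 < t ^ 2 * ∑ j, ‖x j‖ ^ 2 := by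
      have ht2 : 1 < t ^ 2 := by nlinarith
      calc ∑ j, ‖x j‖ ^ 2 = 1 * ∑ j, ‖x j‖ ^ 2 := (one_mul _).symm
        _ < t ^ 2 * ∑ j, ‖x j‖ ^ 2 := mul_lt_mul_of_pos_right ht2 (by linarith)
    rw [hA'] at hS'
    linarith

/-- Every point of `(ℂⁿ∖{0}) × ℂʳ` is charge-equivalent to a point of `S`. -/
lemma aux_exists_rep {n r : ℕ} (d : Fin r → ℕ) (hd : ∀ k, 0 < d k)
    (x : Fin n → ℂ) (p : Fin r → ℂ) (hx : x ≠ 0) :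
      ∃ (x' : Fin n → ℂ) (p' : Fin r → ℂ),
        ((∑ j, ‖x' j‖ ^ 2) - ∑ k, (d k : ℝ) * ‖p' k‖ ^ 2 = 1) ∧
        ∃ lam : ℂ, lam ≠ 0 ∧ (∀ j, x j = lam * x' j) ∧
          (∀ k, p k = (lam ^ d k)⁻¹ * p' k) := by
  set A : ℝ := ∑ j, ‖x j‖ ^ 2 with hAdef
  set C : ℝ := ∑ k, (d k : ℝ) * ‖p k‖ ^ 2 with hCdef
  have hApos : 0 < A := by
    obtain ⟨j, hj⟩ : ∃ j, x j ≠ 0 := Function.ne_iff.1 hx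
    exact Finset.sum_pos' (fun i _ => by positivity)
      ⟨j, Finset.mem_univ j, pow_pos (norm_pos_iff.2 hj) 2⟩
  have hC : 0 ≤ C := Finset.sum_nonneg fun k _ => by positivity
  set h : ℝ → ℝ := fun t => A / t ^ 2 - ∑ k, (d k : ℝ) * (t ^ d k) ^ 2 * ‖p k‖ ^ 2
    with hhdef
  set a : ℝ := min 1 (Real.sqrt (A / (1 + C))) with hadef
  set b : ℝ := max 1 (Real.sqrt A) with hbdef
  have hsq : 0 < A / (1 + C) := by positivity
  have ha0 : 0 < a := lt_min one_pos (Real.sqrt_pos.2 hsq)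
  have hab : a ≤ b := le_trans (min_le_left _ _) (le_max_left _ _)
  have hb1 : (1:ℝ) ≤ b := le_max_left _ _
  -- h a ≥ 1
  have hha : 1 ≤ h a := by
    have ha1 : a ≤ 1 := min_le_left _ _
    have ha2 : a ^ 2 ≤ A / (1 + C) := by
      have := min_le_right 1 (Real.sqrt (A / (1 + C)))
      calc a ^ 2 ≤ Real.sqrt (A / (1 + C)) ^ 2 := by
            apply pow_le_pow_left₀ ha0.le this
        _ = A / (1 + C) := Real.sq_sqrt hsq.le
    have h1 : 1 + C ≤ A / a ^ 2 := by
      rw [le_div_iff₀ (by positivity)]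
      calc (1 + C) * a ^ 2 ≤ (1 + C) * (A / (1 + C)) :=
            mul_le_mul_of_nonneg_left ha2 (by positivity)
        _ = A := by field_simp
    have h2 : ∑ k, (d k : ℝ) * (a ^ d k) ^ 2 * ‖p k‖ ^ 2 ≤ C := by
      apply Finset.sum_le_sum
      intro k _
      have hs1 : (a ^ d k) ^ 2 ≤ 1 := pow_le_one₀ (by positivity) (pow_le_one₀ ha0.le ha1)
      have h' : (d k : ℝ) * ‖p k‖ ^ 2 * (a ^ d k) ^ 2 ≤ (d k : ℝ) * ‖p k‖ ^ 2 :=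
        mul_le_of_le_one_right (by positivity) hs1
      linarith [h']
    simp only [hhdef]
    linarith
  -- h b ≤ 1
  have hhb : h b ≤ 1 := by
    have hb2 : A ≤ b ^ 2 := by
      have := le_max_right 1 (Real.sqrt A)
      calc A = Real.sqrt A ^ 2 := (Real.sq_sqrt hApos.le).symm
        _ ≤ b ^ 2 := by apply pow_le_pow_left₀ (Real.sqrt_nonneg _) this
    have h1 : A / b ^ 2 ≤ 1 := by
      rw [div_le_one (by positivity)]; exact hb2
    have h2 : 0 ≤ ∑ k, (d k : ℝ) * (b ^ d k) ^ 2 * ‖p k‖ ^ 2 :=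
      Finset.sum_nonneg fun k _ => by positivity
    simp only [hhdef]
    linarith
  -- continuity on [a,b]
  have hcont : ContinuousOn h (Set.Icc a b) := by
    apply ContinuousOn.sub
    · apply ContinuousOn.div continuousOn_const (continuous_pow 2).continuousOn
      intro t ht
      have : 0 < t := lt_of_lt_of_le ha0 ht.1
      positivity
    · exact (continuous_finset_sum _ fun k _ =>
        (continuous_const.mul ((continuous_pow (d k)).pow 2)).mul
          continuous_const).continuousOn
  obtain ⟨t, hts, hht⟩ := intermediate_value_Icc' hab hcont ⟨hhb, hha⟩
  have ht0 : 0 < t := lt_of_lt_of_le ha0 hts.1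
  have htC : ((t:ℝ) : ℂ) ≠ 0 := by
    exact_mod_cast ne_of_gt ht0
  refine ⟨fun j => x j / (t:ℂ), fun k => (t:ℂ) ^ d k * p k, ?_, (t:ℂ), htC, ?_, ?_⟩
  · have e1 : ∑ j, ‖x j / (t:ℂ)‖ ^ 2 = A / t ^ 2 := by
      rw [hAdef, Finset.sum_div]
      refine Finset.sum_congr rfl fun j _ => ?_
      rw [norm_div, div_pow, Complex.norm_real, Real.norm_of_nonneg ht0.le]
    have e2 : ∑ k, (d k : ℝ) * ‖(t:ℂ) ^ d k * p k‖ ^ 2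
        = ∑ k, (d k : ℝ) * (t ^ d k) ^ 2 * ‖p k‖ ^ 2 := by
      refine Finset.sum_congr rfl fun k _ => ?_
      rw [norm_mul, norm_pow, Complex.norm_real, Real.norm_of_nonneg ht0.le]
      ring
    rw [e1, e2]
    exact hht
  · intro j
    field_simp
  · intro k
    rw [← mul_assoc, inv_mul_cancel₀ (pow_ne_zero _ htC), one_mul]

end Aux

/-- On `S = F⁻¹(1)` (where `F(x,p) = Σ|xⱼ|² − Σ dₖ|pₖ|²`), two points of `S`
lie in the same orbit of the `ℂ*`-charge action `λ·(x,p) = (λx, λ^{-d}p)` iff they lie in the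
same `U(1)`-orbit `e^{iθ}·(x,p) = (e^{iθ}x, e^{-i dₖ θ}pₖ)`; moreover every point of
`(ℂⁿ∖{0}) × ℂʳ` is charge-equivalent to a point of `S`.  Hence `S/U(1)` is in bijection
with `X_CY`. -/
theorem S_mod_U1_is_XCY
    (n r : ℕ) (hn : 0 < n) (hr : 0 < r) (d : Fin r → ℕ) (hd : ∀ k, 0 < d k) :
    (∀ (x : Fin n → ℂ) (p : Fin r → ℂ) (x' : Fin n → ℂ) (p' : Fin r → ℂ),
      ((∑ j, ‖x j‖ ^ 2) - ∑ k, (d k : ℝ) * ‖p k‖ ^ 2 = 1) →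
      ((∑ j, ‖x' j‖ ^ 2) - ∑ k, (d k : ℝ) * ‖p' k‖ ^ 2 = 1) →
      ((∃ lam : ℂ, lam ≠ 0 ∧ (∀ j, x' j = lam * x j) ∧
          (∀ k, p' k = (lam ^ d k)⁻¹ * p k)) ↔
        (∃ θ : ℝ, (∀ j, x' j = Complex.exp (θ * Complex.I) * x j) ∧
          (∀ k, p' k = Complex.exp (-((d k : ℝ) * θ) * Complex.I) * p k)))) ∧
    (∀ (x : Fin n → ℂ) (p : Fin r → ℂ), x ≠ 0 →
      ∃ (x' : Fin n → ℂ) (p' : Fin r → ℂ),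
        ((∑ j, ‖x' j‖ ^ 2) - ∑ k, (d k : ℝ) * ‖p' k‖ ^ 2 = 1) ∧
        ∃ lam : ℂ, lam ≠ 0 ∧ (∀ j, x j = lam * x' j) ∧
          (∀ k, p k = (lam ^ d k)⁻¹ * p' k)) := by
  constructor
  · intro x p x' p' hS hS'
    constructor
    · rintro ⟨lam, hlam, hx, hp⟩
      have ht : ‖lam‖ = 1 := aux_norm_one d hd x p x' p' hS hS' lam hlam hx hp
      obtain ⟨θ, hθ⟩ : ∃ θ : ℝ, lam = Complex.exp ((θ : ℂ) * Complex.I) :=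
        ⟨lam.arg, by
          conv_lhs => rw [← Complex.norm_mul_exp_arg_mul_I lam]
          rw [ht, ofReal_one, one_mul]⟩
      refine ⟨θ, fun j => by rw [hx j, hθ], fun k => ?_⟩
      rw [hp k, hθ, ← Complex.exp_nat_mul, ← Complex.exp_neg]
      congr 1
      push_cast
      ring
    · rintro ⟨θ, hx, hp⟩
      refine ⟨Complex.exp ((θ:ℂ) * Complex.I), Complex.exp_ne_zero _, hx, fun k => ?_⟩
      rw [hp k, ← Complex.exp_nat_mul, ← Complex.exp_neg]
      congr 1
      push_cast
      ring
  · intro x p hx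
    exact aux_exists_rep d hd x p hx
end

section
/- Let W = Σⱼ pⱼWⱼ with Wⱼ homogeneous of degree dⱼ, and suppose there is a constant c > 0 such that on S, for |(x,p)| large, all coordinates satisfy |xⱼ|,|pₖ| ≤ c(|𝒟W|+1)^{1/d_min}, where 𝒟^k W denotes the tensor of all k-th partial derivatives of W in the ambient coordinates and |𝒟^kW|² = Σ |∂_{j₁}⋯∂_{j_k}W|². If d_max ≤ 2d_min − 1, then for every k ≥ 2 and every ε > 0 and C > 0, for |(x,p)| ∈ S sufficiently large: |𝒟^k W| ≤ ε|𝒟W|^k − C. In other words ε|𝒟W|^k − |𝒟^kW| → +∞ as (x,p) → ∞ in S. -/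
open MvPolynomial

noncomputable section

/-- The hybrid potential `W = Σₖ pₖ Wₖ`. -/
def Wtot (n r : ℕ) (W : Fin r → MvPolynomial (Fin n) ℂ) :
    MvPolynomial (Fin n ⊕ Fin r) ℂ :=
  ∑ k : Fin r, X (Sum.inr k) * rename Sum.inl (W k)

/-- `|𝒟^k W|²` at `(x,p)`: the sum of the squared absolute values of all `k`-th order
partial derivatives of `W` in the flat ambient coordinates. -/
def derivNormSq (n r : ℕ) (W : Fin r → MvPolynomial (Fin n) ℂ) (k : ℕ)
    (x : Fin n → ℂ) (p : Fin r → ℂ) : ℝ :=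
  ∑ js : Fin k → (Fin n ⊕ Fin r),
    ‖eval (Sum.elim x p) ((List.ofFn js).foldr (fun i q => pderiv i q) (Wtot n r W))‖ ^ 2

lemma aux_totalDegree_pderiv_le {σ : Type*} [DecidableEq σ] {R : Type*} [CommSemiring R]
    (f : MvPolynomial σ R) (i : σ) :
    (pderiv i f).totalDegree ≤ f.totalDegree - 1 := by
  conv_lhs => rw [f.as_sum]
  rw [map_sum]
  refine (totalDegree_finset_sum _ _).trans (Finset.sup_le fun s hs => ?_)
  rw [pderiv_monomial]
  by_cases h : s i = 0
  · simp [h]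
  · refine (totalDegree_monomial_le _ _).trans ?_
    have h1 : (s - Finsupp.single i 1) + Finsupp.single i 1 = s := by
      ext j
      simp only [Finsupp.add_apply, Finsupp.tsub_apply, Finsupp.single_apply]
      by_cases hj : i = j
      · subst hj; simp; omega
      · simp [hj]
    have h2 : ((s - Finsupp.single i 1).sum fun _ e => e) + 1 = s.sum fun _ e => e := by
      conv_rhs => rw [← h1]
      rw [Finsupp.sum_add_index (by simp) (by simp)]
      simp [Finsupp.sum_single_index]
    have h3 := le_totalDegree hs
    have : ((s - Finsupp.single i 1).sum fun _ => id) = (s - Finsupp.single i 1).sum fun _ e => e := rfl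
    omega

lemma aux_totalDegree_foldr_pderiv {σ : Type*} [DecidableEq σ] {R : Type*} [CommSemiring R]
    (l : List σ) (f : MvPolynomial σ R) :
    ((l.foldr (fun i q => pderiv i q) f)).totalDegree ≤ f.totalDegree - l.length := by
  induction l with
  | nil => simp
  | cons a l ih =>
    have h := aux_totalDegree_pderiv_le (l.foldr (fun i q => pderiv i q) f) a
    simp only [List.foldr_cons, List.length_cons]
    omega

lemma aux_eval_norm_le {σ : Type*} [Fintype σ] (Q : MvPolynomial σ ℂ) {D : ℕ}
    (hD : Q.totalDegree ≤ D) :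
    ∃ A : ℝ, 0 ≤ A ∧ ∀ (v : σ → ℂ) (M : ℝ), 0 ≤ M → (∀ i, ‖v i‖ ≤ M) →
      ‖eval v Q‖ ≤ A * (M + 1) ^ D := by
  refine ⟨∑ s ∈ Q.support, ‖coeff s Q‖, Finset.sum_nonneg fun _ _ => norm_nonneg _,
    fun v M hM hv => ?_⟩
  rw [eval_eq]
  refine (norm_sum_le _ _).trans ?_
  rw [Finset.sum_mul]
  refine Finset.sum_le_sum fun s hs => ?_
  rw [norm_mul]
  refine mul_le_mul_of_nonneg_left ?_ (norm_nonneg _)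
  rw [norm_prod]
  calc (∏ i ∈ s.support, ‖v i ^ s i‖)
      ≤ ∏ i ∈ s.support, (M + 1) ^ s i := by
        refine Finset.prod_le_prod (fun i _ => norm_nonneg _) fun i _ => ?_
        rw [norm_pow]
        exact pow_le_pow_left₀ (norm_nonneg _) ((hv i).trans (by linarith)) _
    _ = (M + 1) ^ (s.sum fun _ e => e) := by
        rw [Finset.prod_pow_eq_pow_sum]; rfl
    _ ≤ (M + 1) ^ D := by
        exact pow_le_pow_right₀ (by linarith) ((le_totalDegree hs).trans hD)

set_option maxHeartbeats 2000000 in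
/-- Assume `W = Σ pⱼWⱼ` (with `Wⱼ` homogeneous of degree `dⱼ`) satisfies the
coordinate bound `|xⱼ|,|pₖ| ≤ c(|𝒟W|+1)^{1/d_min}` on `S` for `|(x,p)|` large, and
`d_max ≤ 2 d_min − 1`.  Then for every `k ≥ 2`, `ε > 0` and `C`, one has
`|𝒟^k W| ≤ ε |𝒟W|^k − C` on `S` for `|(x,p)|` sufficiently large; i.e.
`ε|𝒟W|^k − |𝒟^kW| → +∞` as `(x,p) → ∞` in `S`. -/
theorem strong_ellipticity_estimate
    (n r : ℕ) (hn : 0 < n) (hr : 0 < r) (d : Fin r → ℕ) (hd : ∀ k, 0 < d k)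
    (dmin dmax : ℕ) (hdmin : IsLeast (Set.range d) dmin)
    (hdmax : IsGreatest (Set.range d) dmax)
    (hd2 : dmax ≤ 2 * dmin - 1)
    (W : Fin r → MvPolynomial (Fin n) ℂ)
    (hW : ∀ k, (W k).IsHomogeneous (d k))
    (hcoord : ∃ c > (0 : ℝ), ∃ R : ℝ, ∀ (x : Fin n → ℂ) (p : Fin r → ℂ),
      ((∑ j, ‖x j‖ ^ 2) - ∑ k, (d k : ℝ) * ‖p k‖ ^ 2 = 1) →
      R ≤ Real.sqrt ((∑ j, ‖x j‖ ^ 2) + ∑ k, ‖p k‖ ^ 2) →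
      (∀ j, ‖x j‖ ≤ c * (Real.sqrt (derivNormSq n r W 1 x p) + 1) ^ ((1 : ℝ) / dmin)) ∧
      (∀ k, ‖p k‖ ≤ c * (Real.sqrt (derivNormSq n r W 1 x p) + 1) ^ ((1 : ℝ) / dmin))) :
    ∀ k : ℕ, 2 ≤ k → ∀ ε > (0 : ℝ), ∀ C : ℝ, ∃ R' : ℝ,
      ∀ (x : Fin n → ℂ) (p : Fin r → ℂ),
        ((∑ j, ‖x j‖ ^ 2) - ∑ k', (d k' : ℝ) * ‖p k'‖ ^ 2 = 1) →
        R' ≤ Real.sqrt ((∑ j, ‖x j‖ ^ 2) + ∑ k', ‖p k'‖ ^ 2) →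
        Real.sqrt (derivNormSq n r W k x p)
          ≤ ε * (Real.sqrt (derivNormSq n r W 1 x p)) ^ k - C := by
  intro k hk ε hε C
  classical
  obtain ⟨c, hc, R₀, hco⟩ := hcoord
  obtain ⟨j₀, hj₀⟩ := hdmin.1
  have hdmin1 : 1 ≤ dmin := hj₀ ▸ hd j₀
  have hdm0 : (0:ℝ) < (dmin:ℝ) := by exact_mod_cast hdmin1
  have hWdeg : (Wtot n r W).totalDegree ≤ dmax + 1 := by
    refine totalDegree_finsetSum_le fun j _ => ?_
    refine (totalDegree_mul _ _).trans ?_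
    have h1 : (X (Sum.inr j) : MvPolynomial (Fin n ⊕ Fin r) ℂ).totalDegree = 1 :=
      totalDegree_X _
    have h2 : ((rename Sum.inl (W j)) : MvPolynomial (Fin n ⊕ Fin r) ℂ).totalDegree ≤ dmax :=
      (totalDegree_rename_le _ _).trans ((hW j).totalDegree_le.trans (hdmax.2 ⟨j, rfl⟩))
    omega
  set e : ℕ := dmax + 1 - k with he
  have hdeg : ∀ js : Fin k → (Fin n ⊕ Fin r),
      ((List.ofFn js).foldr (fun i q => pderiv i q) (Wtot n r W)).totalDegree ≤ e := by
    intro js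
    refine (aux_totalDegree_foldr_pderiv _ _).trans ?_
    rw [List.length_ofFn]
    omega
  have hA := fun js : Fin k → (Fin n ⊕ Fin r) => aux_eval_norm_le _ (hdeg js)
  choose A hA0 hAle using hA
  set B : ℝ := Real.sqrt (∑ js : Fin k → (Fin n ⊕ Fin r), A js ^ 2) with hB
  have hB0 : 0 ≤ B := Real.sqrt_nonneg _
  have hmaster : ∀ (x : Fin n → ℂ) (p : Fin r → ℂ) (M : ℝ), 0 ≤ M →
      (∀ i, ‖Sum.elim x p i‖ ≤ M) →
      Real.sqrt (derivNormSq n r W k x p) ≤ B * (M+1)^e := by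
    intro x p M hM hv
    have h1 : derivNormSq n r W k x p
        ≤ (∑ js : Fin k → (Fin n ⊕ Fin r), A js ^ 2) * ((M+1)^e)^2 := by
      rw [derivNormSq, Finset.sum_mul]
      refine Finset.sum_le_sum fun js _ => ?_
      calc ‖eval (Sum.elim x p)
            ((List.ofFn js).foldr (fun i q => pderiv i q) (Wtot n r W))‖ ^ 2
          ≤ (A js * (M+1)^e) ^ 2 :=
            pow_le_pow_left₀ (norm_nonneg _) (hAle js _ M hM hv) 2
        _ = A js ^ 2 * ((M+1)^e)^2 := mul_pow _ _ _
    calc Real.sqrt (derivNormSq n r W k x p)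
        ≤ Real.sqrt ((∑ js : Fin k → (Fin n ⊕ Fin r), A js ^ 2) * ((M+1)^e)^2) :=
          Real.sqrt_le_sqrt h1
      _ = B * (M+1)^e := by
          rw [Real.sqrt_mul (Finset.sum_nonneg fun js _ => sq_nonneg _),
            Real.sqrt_sq (by positivity)]
  set B₃ : ℝ := B * (c+1)^e * 2^k with hB₃
  have hB₃0 : 0 ≤ B₃ := by positivity
  set K : ℝ := max 1 ((B₃ + max C 0)/ε) with hK
  have hK1 : 1 ≤ K := le_max_left _ _
  have hK0 : (0:ℝ) ≤ K := by linarith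
  set T : ℝ := K ^ dmin with hT
  have hT1 : 1 ≤ T := one_le_pow₀ hK1
  refine ⟨max R₀ (Real.sqrt ((n:ℝ)+r) * (c * (T+1) ^ ((1:ℝ)/dmin))), ?_⟩
  intro x p hS hR
  obtain ⟨hx, hp⟩ := hco x p hS ((le_max_left _ _).trans hR)
  set t := Real.sqrt (derivNormSq n r W 1 x p) with ht
  have ht0 : 0 ≤ t := Real.sqrt_nonneg _
  set u : ℝ := (t+1) ^ ((1:ℝ)/dmin) with hu
  have hu1 : 1 ≤ u := by
    rw [hu]
    calc (1:ℝ) = 1 ^ ((1:ℝ)/dmin) := (Real.one_rpow _).symm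
      _ ≤ (t+1) ^ ((1:ℝ)/dmin) :=
        Real.rpow_le_rpow zero_le_one (by linarith) (by positivity)
  set M := c * u with hM
  have hM0 : 0 ≤ M := by positivity
  have hv : ∀ i, ‖Sum.elim x p i‖ ≤ M := by
    rintro (i|i)
    · exact hx i
    · exact hp i
  have hNle : Real.sqrt ((∑ j, ‖x j‖ ^ 2) + ∑ k', ‖p k'‖ ^ 2) ≤ Real.sqrt ((n:ℝ)+r) * M := by
    have h1 : ∑ j, ‖x j‖^2 ≤ (n:ℝ) * M^2 := by
      calc ∑ j, ‖x j‖^2 ≤ ∑ _j : Fin n, M^2 :=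
            Finset.sum_le_sum fun j _ => pow_le_pow_left₀ (norm_nonneg _) (hx j) 2
        _ = (n:ℝ) * M^2 := by simp [Finset.sum_const, mul_comm]
    have h2 : ∑ k', ‖p k'‖^2 ≤ (r:ℝ) * M^2 := by
      calc ∑ k', ‖p k'‖^2 ≤ ∑ _k' : Fin r, M^2 :=
            Finset.sum_le_sum fun k' _ => pow_le_pow_left₀ (norm_nonneg _) (hp k') 2
        _ = (r:ℝ) * M^2 := by simp [Finset.sum_const, mul_comm]
    calc Real.sqrt ((∑ j, ‖x j‖ ^ 2) + ∑ k', ‖p k'‖ ^ 2)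
        ≤ Real.sqrt (((n:ℝ)+r) * M^2) := Real.sqrt_le_sqrt (by nlinarith)
      _ = Real.sqrt ((n:ℝ)+r) * M := by
          rw [Real.sqrt_mul (by positivity), Real.sqrt_sq hM0]
  have hTt : T ≤ t := by
    have hsq : (0:ℝ) < Real.sqrt ((n:ℝ)+r) := Real.sqrt_pos.mpr (by
      have : (0:ℝ) < (r:ℝ) := by exact_mod_cast hr
      have : (0:ℝ) ≤ (n:ℝ) := Nat.cast_nonneg n
      linarith)
    have h1 : Real.sqrt ((n:ℝ)+r) * (c * (T+1) ^ ((1:ℝ)/dmin)) ≤ Real.sqrt ((n:ℝ)+r) * M :=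
      ((le_max_right _ _).trans hR).trans hNle
    have h2 : c * (T+1) ^ ((1:ℝ)/dmin) ≤ c * u := by
      rw [hM] at h1
      exact (mul_le_mul_iff_right₀ hsq).mp h1
    have h3 : (T+1) ^ ((1:ℝ)/dmin) ≤ u := (mul_le_mul_iff_right₀ hc).mp h2
    have h4 := pow_le_pow_left₀ (by positivity) h3 dmin
    rw [hu, ← Real.rpow_natCast ((T+1) ^ ((1:ℝ)/dmin)) dmin,
      ← Real.rpow_natCast ((t+1) ^ ((1:ℝ)/dmin)) dmin,
      ← Real.rpow_mul (by linarith : (0:ℝ) ≤ T+1),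
      ← Real.rpow_mul (by linarith : (0:ℝ) ≤ t+1),
      one_div, inv_mul_cancel₀ (ne_of_gt hdm0), Real.rpow_one, Real.rpow_one] at h4
    linarith
  have ht1 : 1 ≤ t := le_trans hT1 hTt
  have ht0' : (0:ℝ) < t := by linarith
  have hMu : M + 1 ≤ (c+1) * u := by rw [hM]; nlinarith
  have step1 : Real.sqrt (derivNormSq n r W k x p) ≤ B * ((c+1)*u)^e :=
    (hmaster x p M hM0 hv).trans
      (mul_le_mul_of_nonneg_left (pow_le_pow_left₀ (by linarith) hMu e) hB0)
  set α : ℝ := (1/(dmin:ℝ)) * e with hα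
  have hα0 : 0 ≤ α := by positivity
  have hue : u ^ e = (t+1) ^ α := by
    rw [hu, ← Real.rpow_natCast ((t+1) ^ ((1:ℝ)/dmin)) e,
      ← Real.rpow_mul (by linarith : (0:ℝ) ≤ t+1)]
  have hekd : e + 1 ≤ k * dmin := by
    have h5 : 2 * dmin ≤ k * dmin := Nat.mul_le_mul_right dmin hk
    omega
  have hαk : α ≤ (k:ℝ) - 1/dmin := by
    rw [hα, le_sub_iff_add_le,
      show 1/(dmin:ℝ) * e + 1/dmin = ((e:ℝ)+1)/dmin from by ring,
      div_le_iff₀ hdm0]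
    have h6 : ((e:ℝ)+1) ≤ (k:ℝ)*(dmin:ℝ) := by exact_mod_cast hekd
    linarith
  set β : ℝ := (k:ℝ) - 1/dmin with hβ
  have hβ0 : 0 ≤ β := by
    rw [hβ]
    have h7 : 1/(dmin:ℝ) ≤ 1 := by
      rw [div_le_one hdm0]; exact_mod_cast hdmin1
    have h8 : (2:ℝ) ≤ k := by exact_mod_cast hk
    linarith
  have hβk : β ≤ (k:ℝ) := by
    rw [hβ]
    have : (0:ℝ) ≤ 1/(dmin:ℝ) := by positivity
    linarith
  have step2 : (t+1)^α ≤ 2^k * t^β := by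
    calc (t+1)^α ≤ (2*t)^α := Real.rpow_le_rpow (by linarith) (by linarith) hα0
      _ = (2:ℝ)^α * t^α := Real.mul_rpow (by norm_num) ht0
      _ ≤ (2:ℝ)^((k:ℕ):ℝ) * t^β := by
          refine mul_le_mul ?_ ?_ (Real.rpow_nonneg ht0 _) (Real.rpow_nonneg (by norm_num) _)
          · exact Real.rpow_le_rpow_of_exponent_le one_le_two (hαk.trans hβk)
          · exact Real.rpow_le_rpow_of_exponent_le ht1 hαk
      _ = 2^k * t^β := by rw [Real.rpow_natCast]
  have step3 : Real.sqrt (derivNormSq n r W k x p) ≤ B₃ * t^β := by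
    calc Real.sqrt (derivNormSq n r W k x p) ≤ B * ((c+1)*u)^e := step1
      _ = B * (c+1)^e * ((t+1)^α) := by rw [mul_pow, hue]; ring
      _ ≤ B * (c+1)^e * (2^k * t^β) :=
          mul_le_mul_of_nonneg_left step2 (by positivity)
      _ = B₃ * t^β := by rw [hB₃]; ring
  have htu : K ≤ t ^ ((1:ℝ)/dmin) := by
    have h9 : T ^ ((1:ℝ)/dmin) ≤ t ^ ((1:ℝ)/dmin) :=
      Real.rpow_le_rpow (by linarith) hTt (by positivity)
    have h10 : T ^ ((1:ℝ)/dmin) = K := by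
      rw [hT, ← Real.rpow_natCast K dmin, ← Real.rpow_mul hK0,
        mul_one_div, div_self (ne_of_gt hdm0), Real.rpow_one]
    rwa [h10] at h9
  have hεt : B₃ + max C 0 ≤ ε * t ^ ((1:ℝ)/dmin) := by
    have h11 : (B₃ + max C 0)/ε ≤ K := le_max_right _ _
    have h12 := h11.trans htu
    rw [div_le_iff₀ hε] at h12
    linarith [mul_comm ε (t ^ ((1:ℝ)/dmin))]
  have htβ1 : 1 ≤ t^β := by
    calc (1:ℝ) = 1 ^ β := (Real.one_rpow _).symm
      _ ≤ t ^ β := Real.rpow_le_rpow zero_le_one ht1 hβ0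
  have htk : (t:ℝ)^k = t^β * t^((1:ℝ)/dmin) := by
    rw [← Real.rpow_natCast t k, ← Real.rpow_add ht0']
    congr 1
    rw [hβ]; ring
  have final : B₃ * t^β + C ≤ ε * t^k := by
    have h13 : C ≤ max C 0 * t^β :=
      (le_max_left C 0).trans (le_mul_of_one_le_right (le_max_right C 0) htβ1)
    calc B₃ * t^β + C ≤ B₃ * t^β + max C 0 * t^β := by linarith
      _ = (B₃ + max C 0) * t^β := by ring
      _ ≤ (ε * t^((1:ℝ)/dmin)) * t^β :=
          mul_le_mul_of_nonneg_right hεt (Real.rpow_nonneg ht0 _)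
      _ = ε * t^k := by rw [htk]; ring
  linarith
end
end

section
/- With W = Σ_{l=1}^r p_l W_l, W_l homogeneous of degree d_l, the following identity of algebraic 2-forms holds on each chart {xⱼ ≠ 0}: Σ_{l=1}^r (1/d_l) d(W_l/xⱼ^{d_l}) ∧ d(xⱼ^{d_l} p_l) = Σ_{l=1}^r (1/d_l) dW_l ∧ dp_l + dW ∧ (dxⱼ/xⱼ). Consequently, for any j,k: Σ_{l=1}^r (1/d_l)[ d(W_l/xⱼ^{d_l}) ∧ d(xⱼ^{d_l}p_l) − d(W_l/xₖ^{d_l}) ∧ d(xₖ^{d_l}p_l) ] = dW ∧ (dxⱼ/xⱼ − dxₖ/xₖ). -/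
open MvPolynomial

set_option synthInstance.maxHeartbeats 1000000
set_option maxHeartbeats 2000000

noncomputable section

variable (n r : ℕ)

/-- The polynomial ring `ℂ[x₁,…,xₙ,p₁,…,p_r]`. -/
abbrev PRing (n r : ℕ) := MvPolynomial (Fin n ⊕ Fin r) ℂ

/-- The localization `ℂ[x,p][1/(xⱼxₖ)]`. -/
abbrev LRing (n r : ℕ) (j k : Fin n) : Type :=
  Localization.Away (X (Sum.inl j) * X (Sum.inl k) : PRing n r)

namespace TwoFormAux

variable {A : Type*} [CommRing A] [Algebra ℂ A]

local notation "DD" => KaehlerDifferential.D ℂ A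
local notation "ιE" => ExteriorAlgebra.ι A (M := KaehlerDifferential ℂ A)

lemma D_inv (x i : A) (hxi : x * i = 1) :
    DD i = -((i * i) • DD x) := by
  have h0 : x • DD i + i • DD x = 0 := by
    rw [← Derivation.leibniz, hxi, Derivation.map_one_eq_zero]
  calc DD i = (i * x) • DD i := by rw [mul_comm i x, hxi, one_smul]
    _ = i • (x • DD i) := mul_smul _ _ _
    _ = i • (-(i • DD x)) := by rw [eq_neg_of_add_eq_zero_left h0]
    _ = -((i * i) • DD x) := by rw [smul_neg, smul_smul]

lemma key_term (m : ℕ) (hm : 0 < m) (x i : A) (hxi : x * i = 1) (w p : A) :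
    ιE (DD (w * i ^ m)) * ιE (DD (x ^ m * p))
      = ιE (DD w) * ιE (DD p)
        + ((m : A) * (p * i)) • (ιE (DD w) * ιE (DD x))
        + ((m : A) * (w * i)) • (ιE (DD p) * ιE (DD x)) := by
  obtain ⟨m, rfl⟩ := Nat.exists_eq_succ_of_ne_zero hm.ne'
  have hpow : ∀ a : ℕ, i ^ a * x ^ a = 1 := fun a => by
    rw [← mul_pow, mul_comm i x, hxi, one_pow]
  have hf : DD (w * i ^ (m + 1))
      = (i ^ (m + 1)) • DD w + (-(((m : A) + 1) * (w * i ^ (m + 2)))) • DD x := by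
    rw [Derivation.leibniz, Derivation.leibniz_pow, D_inv x i hxi, Nat.add_sub_cancel]
    match_scalars <;> (push_cast; ring)
  have hg : DD (x ^ (m + 1) * p)
      = (x ^ (m + 1)) • DD p + (((m : A) + 1) * (p * x ^ m)) • DD x := by
    rw [Derivation.leibniz, Derivation.leibniz_pow, Nat.add_sub_cancel]
    match_scalars <;> (push_cast; ring)
  rw [hf, hg, map_add, map_add, map_smul, map_smul, map_smul, map_smul]
  rw [add_mul, mul_add, mul_add, smul_mul_smul_comm, smul_mul_smul_comm,
    smul_mul_smul_comm, smul_mul_smul_comm]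
  rw [ExteriorAlgebra.ι_sq_zero, smul_zero, add_zero]
  have hac : i ^ (m + 1) * x ^ (m + 1) = 1 := hpow (m + 1)
  have hae : i ^ (m + 1) * (((m : A) + 1) * (p * x ^ m))
      = ((m : A) + 1) * (p * i) := by
    have : i ^ (m + 1) * x ^ m = i := by
      rw [pow_succ, mul_comm (i ^ m) i, mul_assoc, hpow m, mul_one]
    calc i ^ (m + 1) * (((m : A) + 1) * (p * x ^ m))
        = ((m : A) + 1) * (p * (i ^ (m + 1) * x ^ m)) := by ring
      _ = ((m : A) + 1) * (p * i) := by rw [this]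
  have hbc : (-(((m : A) + 1) * (w * i ^ (m + 2)))) * x ^ (m + 1)
      = -(((m : A) + 1) * (w * i)) := by
    have : i ^ (m + 2) * x ^ (m + 1) = i := by
      rw [show m + 2 = (m + 1) + 1 from rfl, pow_succ, mul_comm (i ^ (m + 1)) i,
        mul_assoc, hpow (m + 1), mul_one]
    calc (-(((m : A) + 1) * (w * i ^ (m + 2)))) * x ^ (m + 1)
        = -(((m : A) + 1) * (w * (i ^ (m + 2) * x ^ (m + 1)))) := by ring
      _ = -(((m : A) + 1) * (w * i)) := by rw [this]
  rw [hac, one_smul, hae, hbc]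
  have hsw : ιE (DD x) * ιE (DD p) = -(ιE (DD p) * ιE (DD x)) :=
    eq_neg_of_add_eq_zero_left (ExteriorAlgebra.ι_add_mul_swap _ _)
  rw [hsw, smul_neg, neg_smul, neg_neg]
  push_cast
  abel


lemma chart (r : ℕ) (d : Fin r → ℕ) (hd : ∀ l, 0 < d l) (wa pa : Fin r → A)
    (x i : A) (hxi : x * i = 1) :
    (∑ l : Fin r, (algebraMap ℂ A ((d l : ℂ)⁻¹)) •
        (ιE (DD (wa l * i ^ d l)) * ιE (DD (x ^ d l * pa l))))
      = (∑ l : Fin r, (algebraMap ℂ A ((d l : ℂ)⁻¹)) • (ιE (DD (wa l)) * ιE (DD (pa l))))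
        + (∑ l : Fin r, (pa l • ιE (DD (wa l)) + wa l • ιE (DD (pa l)))) * (i • ιE (DD x)) := by
  rw [Finset.sum_mul, ← Finset.sum_add_distrib]
  refine Finset.sum_congr rfl fun l _ => ?_
  rw [key_term (d l) (hd l) x i hxi]
  have hcd : algebraMap ℂ A ((d l : ℂ)⁻¹) * ((d l : ℕ) : A) = 1 := by
    rw [← map_natCast (algebraMap ℂ A) (d l), ← map_mul,
      inv_mul_cancel₀ (by exact_mod_cast (hd l).ne'), map_one]
  rw [smul_add, smul_add, smul_smul, smul_smul, ← mul_assoc, hcd, one_mul,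
    ← mul_assoc, hcd, one_mul]
  rw [add_mul, smul_mul_smul_comm, smul_mul_smul_comm]
  rw [add_assoc]

end TwoFormAux

/-- In the module of Kähler differentials (realized inside the exterior
algebra of `Ω_{A/ℂ}` for `A = ℂ[x,p][1/(xⱼxₖ)]`), with `W = Σ_l p_l W_l`, `W_l` homogeneous
of degree `d_l`, the following identities of 2-forms hold:
`Σ_l (1/d_l) d(W_l/xⱼ^{d_l}) ∧ d(xⱼ^{d_l} p_l) = Σ_l (1/d_l) dW_l ∧ dp_l + dW ∧ (dxⱼ/xⱼ)`,
and consequently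
`Σ_l (1/d_l)[d(W_l/xⱼ^{d_l}) ∧ d(xⱼ^{d_l}p_l) − d(W_l/xₖ^{d_l}) ∧ d(xₖ^{d_l}p_l)]
  = dW ∧ (dxⱼ/xⱼ − dxₖ/xₖ)`. -/
theorem two_form_identities
    (hn : 0 < n) (hr : 0 < r) (d : Fin r → ℕ) (hd : ∀ l, 0 < d l)
    (W : Fin r → MvPolynomial (Fin n) ℂ) (hW : ∀ l, (W l).IsHomogeneous (d l))
    (j k : Fin n) :
    letI A := LRing n r j k
    letI φ := algebraMap (PRing n r) A
    letI u : A := IsLocalization.Away.invSelf (X (Sum.inl j) * X (Sum.inl k) : PRing n r)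
    letI invxj : A := φ (X (Sum.inl k)) * u
    letI invxk : A := φ (X (Sum.inl j)) * u
    letI xj : A := φ (X (Sum.inl j))
    letI xk : A := φ (X (Sum.inl k))
    letI D := KaehlerDifferential.D ℂ A
    letI ι := ExteriorAlgebra.ι A (M := KaehlerDifferential ℂ A)
    letI Wa : Fin r → A := fun l => φ (rename Sum.inl (W l))
    letI pa : Fin r → A := fun l => φ (X (Sum.inr l))
    letI Wt : A := φ (∑ l : Fin r, X (Sum.inr l) * rename Sum.inl (W l))
    letI c : Fin r → A := fun l => algebraMap ℂ A ((d l : ℂ)⁻¹)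
    ((∑ l : Fin r, c l • (ι (D (Wa l * invxj ^ d l)) * ι (D (xj ^ d l * pa l))))
        = (∑ l : Fin r, c l • (ι (D (Wa l)) * ι (D (pa l))))
          + ι (D Wt) * (invxj • ι (D xj))) ∧
    ((∑ l : Fin r, c l •
          ((ι (D (Wa l * invxj ^ d l)) * ι (D (xj ^ d l * pa l)))
            - (ι (D (Wa l * invxk ^ d l)) * ι (D (xk ^ d l * pa l)))))
        = ι (D Wt) * (invxj • ι (D xj) - invxk • ι (D xk))) := by
  set A := LRing n r j k with hA
  set φ := algebraMap (PRing n r) A with hφ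
  set u : A := IsLocalization.Away.invSelf (X (Sum.inl j) * X (Sum.inl k) : PRing n r) with hu
  have hj : φ (X (Sum.inl j)) * (φ (X (Sum.inl k)) * u) = 1 := by
    rw [← mul_assoc, ← map_mul]
    exact IsLocalization.Away.mul_invSelf _
  have hk : φ (X (Sum.inl k)) * (φ (X (Sum.inl j)) * u) = 1 := by
    rw [← mul_assoc, ← map_mul, mul_comm (X (Sum.inl k) : PRing n r)]
    exact IsLocalization.Away.mul_invSelf _
  have hWt : ExteriorAlgebra.ι A (KaehlerDifferential.D ℂ A
        (φ (∑ l : Fin r, X (Sum.inr l) * rename Sum.inl (W l))))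
      = ∑ l : Fin r, ((φ (X (Sum.inr l))) •
            ExteriorAlgebra.ι A (KaehlerDifferential.D ℂ A (φ (rename Sum.inl (W l))))
          + (φ (rename Sum.inl (W l))) •
            ExteriorAlgebra.ι A (KaehlerDifferential.D ℂ A (φ (X (Sum.inr l))))) := by
    rw [map_sum, map_sum, map_sum]
    refine Finset.sum_congr rfl fun l _ => ?_
    rw [map_mul, Derivation.leibniz, map_add, map_smul, map_smul]
  have H1 := TwoFormAux.chart (A := A) r d hd
    (fun l => φ (rename Sum.inl (W l))) (fun l => φ (X (Sum.inr l)))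
    (φ (X (Sum.inl j))) (φ (X (Sum.inl k)) * u) hj
  have H2 := TwoFormAux.chart (A := A) r d hd
    (fun l => φ (rename Sum.inl (W l))) (fun l => φ (X (Sum.inr l)))
    (φ (X (Sum.inl k))) (φ (X (Sum.inl j)) * u) hk
  refine ⟨?_, ?_⟩
  · rw [hWt]
    exact H1
  · rw [hWt]
    have hsplit : (∑ l : Fin r, (algebraMap ℂ A ((d l : ℂ)⁻¹)) •
          ((ExteriorAlgebra.ι A (KaehlerDifferential.D ℂ A
              (φ (rename Sum.inl (W l)) * (φ (X (Sum.inl k)) * u) ^ d l)) *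
            ExteriorAlgebra.ι A (KaehlerDifferential.D ℂ A
              (φ (X (Sum.inl j)) ^ d l * φ (X (Sum.inr l)))))
          - (ExteriorAlgebra.ι A (KaehlerDifferential.D ℂ A
              (φ (rename Sum.inl (W l)) * (φ (X (Sum.inl j)) * u) ^ d l)) *
            ExteriorAlgebra.ι A (KaehlerDifferential.D ℂ A
              (φ (X (Sum.inl k)) ^ d l * φ (X (Sum.inr l)))))))
        = (∑ l : Fin r, (algebraMap ℂ A ((d l : ℂ)⁻¹)) •
            (ExteriorAlgebra.ι A (KaehlerDifferential.D ℂ A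
              (φ (rename Sum.inl (W l)) * (φ (X (Sum.inl k)) * u) ^ d l)) *
             ExteriorAlgebra.ι A (KaehlerDifferential.D ℂ A
              (φ (X (Sum.inl j)) ^ d l * φ (X (Sum.inr l))))))
          - (∑ l : Fin r, (algebraMap ℂ A ((d l : ℂ)⁻¹)) •
            (ExteriorAlgebra.ι A (KaehlerDifferential.D ℂ A
              (φ (rename Sum.inl (W l)) * (φ (X (Sum.inl j)) * u) ^ d l)) *
             ExteriorAlgebra.ι A (KaehlerDifferential.D ℂ A
              (φ (X (Sum.inl k)) ^ d l * φ (X (Sum.inr l)))))) := by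
      rw [← Finset.sum_sub_distrib]
      exact Finset.sum_congr rfl fun l _ => by
        exact smul_sub (M := A) (A := ExteriorAlgebra A (KaehlerDifferential ℂ A)) _ _ _
    rw [hsplit, H1, H2, mul_sub]
    abel
end
end
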